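/- For every natural number n and every real y, ∫_ℝ e^{−(x−y)²/2} · H_n(x) · e^{−x²/2} dx = √π · e^{−y²/4} · yⁿ, where H_n is the physicists' Hermite polynomial of degree n. -/

import Mathlib

open MeasureTheory

/-- Physicists' Hermite polynomial via the Rodrigues formula:
`H_n(x) = (−1)ⁿ e^{x²} (dⁿ/dxⁿ)(e^{−x²})`. -/
noncomputable def physHermite (n : ℕ) (x : ℝ) : ℝ :=
  (-1) ^ n * Real.exp (x ^ 2) * iteratedDeriv n (fun y => Real.exp (-y ^ 2)) x

open Polynomial in
/-- The polynomial sequence appearing in derivatives of the Gaussian. -/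
noncomputable def hermAux : ℕ → Polynomial ℝ
  | 0 => 1
  | n + 1 => derivative (hermAux n) - C 2 * X * hermAux n

open Polynomial in
lemma hasDerivAt_poly_gauss (p : Polynomial ℝ) (x : ℝ) :
    HasDerivAt (fun t : ℝ => p.eval t * Real.exp (-t ^ 2))
      ((derivative p - C 2 * X * p).eval x * Real.exp (-x ^ 2)) x := by
  have h2 : HasDerivAt (fun t : ℝ => -t ^ 2) (-(2 * x)) x := by
    simpa using (hasDerivAt_pow 2 x).fun_neg
  have h1 := h2.exp
  have h := (p.hasDerivAt x).mul h1
  refine h.congr_deriv ?_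
  simp only [eval_sub, eval_mul, eval_C, eval_X]
  ring

open Polynomial in
lemma iteratedDeriv_gauss (n : ℕ) :
    iteratedDeriv n (fun y : ℝ => Real.exp (-y ^ 2))
      = fun x : ℝ => (hermAux n).eval x * Real.exp (-x ^ 2) := by
  induction n with
  | zero => funext x; simp [hermAux]
  | succ n ih =>
    funext x
    rw [iteratedDeriv_succ, ih]
    have := (hasDerivAt_poly_gauss (hermAux n) x).deriv
    rw [this]
    rfl

lemma integrable_pow_gauss (n : ℕ) :
    Integrable fun x : ℝ => x ^ n * Real.exp (-x ^ 2) := by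
  have hg : Integrable fun x : ℝ =>
      ((n.factorial : ℝ) * Real.exp (1 / 2)) * Real.exp (-(1 / 2) * x ^ 2) :=
    (integrable_exp_neg_mul_sq (by norm_num : (0:ℝ) < 1/2)).const_mul _
  refine hg.mono' ?_ ?_
  · exact ((continuous_pow n).mul
      (Real.continuous_exp.comp (continuous_pow 2).neg)).aestronglyMeasurable
  · filter_upwards with x
    have h1 : |x| ^ n ≤ (n.factorial : ℝ) * Real.exp |x| := by
      have hple := Real.pow_div_factorial_le_exp (x := |x|) (abs_nonneg x) n
      have hf : (0:ℝ) < (n.factorial : ℝ) := by positivity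
      calc |x| ^ n = (|x| ^ n / (n.factorial : ℝ)) * (n.factorial : ℝ) := by field_simp
        _ ≤ Real.exp |x| * (n.factorial : ℝ) := mul_le_mul_of_nonneg_right hple hf.le
        _ = (n.factorial : ℝ) * Real.exp |x| := by ring
    have h2 : Real.exp |x| * Real.exp (-x ^ 2)
        ≤ Real.exp (1 / 2) * Real.exp (-(1 / 2) * x ^ 2) := by
      rw [← Real.exp_add, ← Real.exp_add]
      apply Real.exp_le_exp.2
      nlinarith [sq_nonneg (|x| - 1), sq_abs x]
    calc ‖x ^ n * Real.exp (-x ^ 2)‖ = |x| ^ n * Real.exp (-x ^ 2) := by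
          rw [Real.norm_eq_abs, abs_mul, abs_pow, abs_of_nonneg (Real.exp_pos _).le]
      _ ≤ ((n.factorial : ℝ) * Real.exp |x|) * Real.exp (-x ^ 2) :=
          mul_le_mul_of_nonneg_right h1 (Real.exp_pos _).le
      _ = (n.factorial : ℝ) * (Real.exp |x| * Real.exp (-x ^ 2)) := by ring
      _ ≤ (n.factorial : ℝ) * (Real.exp (1 / 2) * Real.exp (-(1 / 2) * x ^ 2)) := by
          apply mul_le_mul_of_nonneg_left h2 (by positivity)
      _ = ((n.factorial : ℝ) * Real.exp (1 / 2)) * Real.exp (-(1 / 2) * x ^ 2) := by ring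

open Polynomial in
lemma integrable_poly_gauss (q : Polynomial ℝ) :
    Integrable fun x : ℝ => q.eval x * Real.exp (-x ^ 2) := by
  have h : ∀ x : ℝ, q.eval x = ∑ i ∈ Finset.range (q.natDegree + 1), q.coeff i * x ^ i :=
    fun x => eval_eq_sum_range x
  simp_rw [h, Finset.sum_mul]
  apply integrable_finset_sum
  intro i _
  simpa [mul_assoc] using (integrable_pow_gauss i).const_mul (q.coeff i)

lemma exp_complete_square (c x : ℝ) :
    Real.exp (c * x) * Real.exp (-x ^ 2)
      = Real.exp (c ^ 2 / 4) * Real.exp (-(x - c / 2) ^ 2) := by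
  rw [← Real.exp_add, ← Real.exp_add]
  congr 1
  ring

open Polynomial in
lemma integrable_exp_poly_gauss (c : ℝ) (q : Polynomial ℝ) :
    Integrable fun x : ℝ => Real.exp (c * x) * (q.eval x * Real.exp (-x ^ 2)) := by
  set r : Polynomial ℝ := q.comp (X + C (c / 2)) with hr
  have hint : Integrable fun x : ℝ =>
      Real.exp (c ^ 2 / 4) * (r.eval (x - c / 2) * Real.exp (-(x - c / 2) ^ 2)) := by
    have := ((integrable_poly_gauss r).comp_sub_right (c / 2)).const_mul (Real.exp (c ^ 2 / 4))
    exact this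
  refine hint.congr (Filter.Eventually.of_forall fun x => ?_)
  have hrq : r.eval (x - c / 2) = q.eval x := by
    simp [hr, eval_comp]
  simp only [hrq]
  linear_combination (-(q.eval x)) * (exp_complete_square c x)

lemma base_integral (c : ℝ) :
    ∫ x : ℝ, Real.exp (c * x) * Real.exp (-x ^ 2)
      = Real.exp (c ^ 2 / 4) * Real.sqrt Real.pi := by
  simp_rw [exp_complete_square]
  rw [MeasureTheory.integral_const_mul]
  congr 1
  rw [integral_sub_right_eq_self (fun t : ℝ => Real.exp (-t ^ 2)) (c / 2)]
  have := integral_gaussian 1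
  simpa using this

open Polynomial in
lemma key_induction (c : ℝ) (n : ℕ) :
    ∫ x : ℝ, Real.exp (c * x) * iteratedDeriv n (fun y : ℝ => Real.exp (-y ^ 2)) x
      = (-c) ^ n * ∫ x : ℝ, Real.exp (c * x) * Real.exp (-x ^ 2) := by
  induction n with
  | zero => simp
  | succ n ih =>
    have hu : ∀ x : ℝ, HasDerivAt (fun t : ℝ => Real.exp (c * t)) (c * Real.exp (c * x)) x := by
      intro x
      have := ((hasDerivAt_id x).const_mul c).exp
      simpa [mul_comm] using this
    have hv : ∀ x : ℝ, HasDerivAt (fun t : ℝ => (hermAux n).eval t * Real.exp (-t ^ 2))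
        ((hermAux (n + 1)).eval x * Real.exp (-x ^ 2)) x := by
      intro x
      exact hasDerivAt_poly_gauss (hermAux n) x
    have huv' : Integrable ((fun t : ℝ => Real.exp (c * t)) *
        (fun x : ℝ => (hermAux (n + 1)).eval x * Real.exp (-x ^ 2))) :=
      integrable_exp_poly_gauss c (hermAux (n + 1))
    have huv : Integrable ((fun t : ℝ => Real.exp (c * t)) *
        (fun x : ℝ => (hermAux n).eval x * Real.exp (-x ^ 2))) :=
      integrable_exp_poly_gauss c (hermAux n)
    have hu'v : Integrable ((fun x : ℝ => c * Real.exp (c * x)) *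
        (fun x : ℝ => (hermAux n).eval x * Real.exp (-x ^ 2))) := by
      refine ((integrable_exp_poly_gauss c (hermAux n)).const_mul c).congr
        (Filter.Eventually.of_forall fun x => ?_)
      simp [Pi.mul_apply]; ring
    have ibp := MeasureTheory.integral_mul_deriv_eq_deriv_mul_of_integrable
      (fun x _ => hu x) (fun x _ => hv x) huv' hu'v huv
    rw [iteratedDeriv_gauss (n + 1)]
    rw [show (∫ x : ℝ, Real.exp (c * x) * ((hermAux (n+1)).eval x * Real.exp (-x ^ 2)))
        = - ∫ x : ℝ, c * Real.exp (c * x) * ((hermAux n).eval x * Real.exp (-x ^ 2)) from ibp]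
    have : (∫ x : ℝ, c * Real.exp (c * x) * ((hermAux n).eval x * Real.exp (-x ^ 2)))
        = c * ∫ x : ℝ, Real.exp (c * x) * ((hermAux n).eval x * Real.exp (-x ^ 2)) := by
      rw [← MeasureTheory.integral_const_mul]
      congr 1; funext x; ring
    rw [this]
    simp only [iteratedDeriv_gauss n] at ih
    rw [ih]
    ring

/-- Hermite–Fourier coefficients of the Gaussian interaction kernel:
`∫ e^{−(x−y)²/2} H_n(x) e^{−x²/2} dx = √π e^{−y²/4} yⁿ`. -/
theorem stmt_12 (n : ℕ) (y : ℝ) :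
    ∫ x : ℝ, Real.exp (-(x - y) ^ 2 / 2) * physHermite n x * Real.exp (-x ^ 2 / 2)
      = Real.sqrt Real.pi * Real.exp (-y ^ 2 / 4) * y ^ n := by
  have hx : ∀ x : ℝ, Real.exp (-(x - y) ^ 2 / 2) * physHermite n x * Real.exp (-x ^ 2 / 2)
      = ((-1 : ℝ) ^ n * Real.exp (-y ^ 2 / 2)) *
        (Real.exp (y * x) * iteratedDeriv n (fun t : ℝ => Real.exp (-t ^ 2)) x) := by
    intro x
    unfold physHermite
    have he : Real.exp (-(x - y) ^ 2 / 2) * Real.exp (x ^ 2) * Real.exp (-x ^ 2 / 2)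
        = Real.exp (-y ^ 2 / 2) * Real.exp (y * x) := by
      rw [← Real.exp_add, ← Real.exp_add, ← Real.exp_add]
      congr 1; ring
    linear_combination ((-1 : ℝ) ^ n * iteratedDeriv n (fun t : ℝ => Real.exp (-t ^ 2)) x) * he
  simp only [hx]
  rw [MeasureTheory.integral_const_mul, key_induction y n, base_integral y]
  have h1 : (-1 : ℝ) ^ n * (-y) ^ n = y ^ n := by
    rw [← mul_pow]; ring_nf
  have h2 : Real.exp (-y ^ 2 / 2) * Real.exp (y ^ 2 / 4) = Real.exp (-y ^ 2 / 4) := by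
    rw [← Real.exp_add]; congr 1; ring
  calc (-1 : ℝ) ^ n * Real.exp (-y ^ 2 / 2) *
        ((-y) ^ n * (Real.exp (y ^ 2 / 4) * Real.sqrt Real.pi))
      = ((-1 : ℝ) ^ n * (-y) ^ n) *
        ((Real.exp (-y ^ 2 / 2) * Real.exp (y ^ 2 / 4)) * Real.sqrt Real.pi) := by ring
    _ = Real.sqrt Real.pi * Real.exp (-y ^ 2 / 4) * y ^ n := by rw [h1, h2]; ring
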